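/- Fix k > 0 and L > 0. Then the function λ ↦ (1/k)·(artanh(k/λ) − artanh((k/λ)·cos(L·√(λ² − k²)/4))) tends to (1/(2k))·log(1 + L²·k²/16) as λ tends to k from the right (i.e. the limit along the filter 𝓝[>] k is 𝓝 ((1/(2k))·log(1 + L²·k²/16))). -/

import Mathlib

open Topology

/-- The inverse hyperbolic tangent, `artanh x = (1/2)·log ((1 + x)/(1 − x))`. -/
noncomputable def Real.artanhLog (x : ℝ) : ℝ := Real.log ((1 + x) / (1 - x)) / 2

open Filter in
set_option maxHeartbeats 1600000 in
/-- **Phase transition `λ → k⁺` in the hyperbolic inradius bound.**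
For fixed `k > 0` and `L > 0`, the right-hand side of the bound for `λ > k` tends to the
right-hand side of the bound for `λ = k` as `λ → k` from the right. -/
theorem tendsto_hyperbolic_bound_lambda_to_k_from_right
    (k L : ℝ) (hk : 0 < k) (hL : 0 < L) :
    Filter.Tendsto
      (fun lam : ℝ => (1 / k) *
        (Real.artanhLog (k / lam) -
          Real.artanhLog ((k / lam) * Real.cos (L * Real.sqrt (lam ^ 2 - k ^ 2) / 4))))
      (𝓝[>] k)
      (𝓝 ((1 / (2 * k)) * Real.log (1 + L ^ 2 * k ^ 2 / 16))) := by
  have hk2 : (2 : ℝ) * k ≠ 0 := by positivity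
  -- sinc limit
  have hsinc : Tendsto (fun x : ℝ => Real.sin x / x) (𝓝[≠] 0) (𝓝 1) := by
    have h := Real.hasDerivAt_sin 0
    rw [Real.cos_zero] at h
    have h2 := hasDerivAt_iff_tendsto_slope.mp h
    simpa [slope_fun_def, Real.sin_zero, div_eq_inv_mul] using h2
  -- sqrt tends to 0
  have hs0 : Tendsto (fun lam : ℝ => Real.sqrt (lam ^ 2 - k ^ 2)) (𝓝[>] k) (𝓝 0) := by
    have hc : Continuous fun lam : ℝ => Real.sqrt (lam ^ 2 - k ^ 2) :=
      Real.continuous_sqrt.comp (by continuity)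
    have := hc.tendsto k
    simp only [sub_self, Real.sqrt_zero] at this
    · exact this.mono_left nhdsWithin_le_nhds
  have hlamid : Tendsto (fun lam : ℝ => lam) (𝓝[>] k) (𝓝 k) :=
    tendsto_id.mono_left nhdsWithin_le_nhds
  -- u := L * sqrt(...) / 8 tends to 0 within Ioi 0
  have hu0 : Tendsto (fun lam : ℝ => L * Real.sqrt (lam ^ 2 - k ^ 2) / 8) (𝓝[>] k) (𝓝[>] 0) := by
    rw [tendsto_nhdsWithin_iff]
    constructor
    · have := (hs0.const_mul L).div_const 8
      simpa using this
    · filter_upwards [self_mem_nhdsWithin] with lam hlam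
      have hlk : k < lam := hlam
      have : 0 < Real.sqrt (lam ^ 2 - k ^ 2) := Real.sqrt_pos.mpr (by nlinarith)
      exact Set.mem_Ioi.mpr (by positivity)
  have hq : Tendsto (fun lam : ℝ =>
      Real.sin (L * Real.sqrt (lam ^ 2 - k ^ 2) / 8) / (L * Real.sqrt (lam ^ 2 - k ^ 2) / 8))
      (𝓝[>] k) (𝓝 1) :=
    hsinc.comp (hu0.mono_right (nhdsWithin_mono 0 (fun x hx => ne_of_gt hx)))
  have hcos : Tendsto (fun lam : ℝ => Real.cos (L * Real.sqrt (lam ^ 2 - k ^ 2) / 4))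
      (𝓝[>] k) (𝓝 1) := by
    have h4 : Tendsto (fun lam : ℝ => L * Real.sqrt (lam ^ 2 - k ^ 2) / 4) (𝓝[>] k) (𝓝 0) := by
      have := (hs0.const_mul L).div_const 4
      simpa using this
    have := (Real.continuous_cos.tendsto 0).comp h4
    simpa [Function.comp_def] using this
  have hnum : Tendsto (fun lam : ℝ => lam + k) (𝓝[>] k) (𝓝 (2 * k)) := by
    have := hlamid.add (tendsto_const_nhds (x := k))
    convert this using 2; ring
  have hden : Tendsto (fun lam : ℝ => lam + k * Real.cos (L * Real.sqrt (lam ^ 2 - k ^ 2) / 4))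
      (𝓝[>] k) (𝓝 (2 * k)) := by
    have := hlamid.add (hcos.const_mul k)
    convert this using 2; ring
  have hfrac1 : Tendsto (fun lam : ℝ =>
      (lam + k) / (lam + k * Real.cos (L * Real.sqrt (lam ^ 2 - k ^ 2) / 4)))
      (𝓝[>] k) (𝓝 1) := by
    have := hnum.div hden hk2
    rwa [div_self hk2] at this
  have hfac2 : Tendsto (fun lam : ℝ =>
      1 + 2 * k * (Real.sin (L * Real.sqrt (lam ^ 2 - k ^ 2) / 8) /
        (L * Real.sqrt (lam ^ 2 - k ^ 2) / 8)) ^ 2 * (L ^ 2 * (lam + k) / 64))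
      (𝓝[>] k) (𝓝 (1 + 2 * k * 1 ^ 2 * (L ^ 2 * (2 * k) / 64))) :=
    tendsto_const_nhds.add (((hq.pow 2).const_mul (2 * k)).mul
      ((hnum.const_mul (L ^ 2)).div_const 64))
  have hGlim : Tendsto (fun lam : ℝ =>
      ((lam + k) / (lam + k * Real.cos (L * Real.sqrt (lam ^ 2 - k ^ 2) / 4))) *
        (1 + 2 * k * (Real.sin (L * Real.sqrt (lam ^ 2 - k ^ 2) / 8) /
          (L * Real.sqrt (lam ^ 2 - k ^ 2) / 8)) ^ 2 * (L ^ 2 * (lam + k) / 64)))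
      (𝓝[>] k) (𝓝 (1 + L ^ 2 * k ^ 2 / 16)) := by
    have := hfrac1.mul hfac2
    have hval : 1 * (1 + 2 * k * 1 ^ 2 * (L ^ 2 * (2 * k) / 64)) = 1 + L ^ 2 * k ^ 2 / 16 := by
      ring
    rwa [hval] at this
  have hpos : (0 : ℝ) < 1 + L ^ 2 * k ^ 2 / 16 := by positivity
  have hlog := ((Real.continuousAt_log hpos.ne').tendsto.comp hGlim).const_mul (1 / (2 * k))
  refine Filter.Tendsto.congr' ?_ hlog
  filter_upwards [self_mem_nhdsWithin] with lam hlam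
  have hlk : k < lam := hlam
  have hlam0 : 0 < lam := hk.trans hlk
  set s := Real.sqrt (lam ^ 2 - k ^ 2) with hsdef
  have hs2 : s ^ 2 = lam ^ 2 - k ^ 2 := Real.sq_sqrt (by nlinarith)
  have hspos : 0 < s := Real.sqrt_pos.mpr (by nlinarith)
  set c := Real.cos (L * s / 4) with hcdef
  have hc1 : c ≤ 1 := Real.cos_le_one _
  have hcm1 : -1 ≤ c := Real.neg_one_le_cos _
  have ha1 : k / lam < 1 := (div_lt_one hlam0).mpr hlk
  have ha0 : 0 < k / lam := by positivity
  have hb1 : k / lam * c < 1 := by nlinarith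
  have hbm1 : -1 < k / lam * c := by nlinarith
  have hP : (0 : ℝ) < (1 + k / lam) / (1 - k / lam) := by
    apply div_pos <;> linarith
  have hQ : (0 : ℝ) < (1 + k / lam * c) / (1 - k / lam * c) := by
    apply div_pos <;> linarith
  have hsin2 : Real.sin (L * s / 8) ^ 2 = (1 - c) / 2 := by
    have h24 : L * s / 4 = 2 * (L * s / 8) := by ring
    have hcc : c = 2 * Real.cos (L * s / 8) ^ 2 - 1 := by
      rw [hcdef, h24, Real.cos_two_mul]
    have := Real.sin_sq_add_cos_sq (L * s / 8)
    linarith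
  have husq : (L * s / 8) ^ 2 = L ^ 2 * (lam ^ 2 - k ^ 2) / 64 := by
    rw [div_pow, mul_pow, hs2]; ring
  have hlamne : lam ≠ 0 := hlam0.ne'
  have hlmk : lam - k ≠ 0 := by intro h; nlinarith
  have hl2k2 : lam ^ 2 - k ^ 2 ≠ 0 := by nlinarith
  have hd1 : lam + k * c ≠ 0 := by nlinarith
  have hd2 : lam - k * c ≠ 0 := by nlinarith
  have h1ma : 1 - k / lam ≠ 0 := by
    rw [sub_ne_zero]; intro h; rw [eq_div_iff hlamne] at h; nlinarith
  have h1mb : 1 - k / lam * c ≠ 0 := by nlinarith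
  have h1pb : 1 + k / lam * c ≠ 0 := by nlinarith
  have hL' : L ≠ 0 := hL.ne'
  have key : (lam + k) / (lam + k * c) *
      (1 + 2 * k * (Real.sin (L * s / 8) / (L * s / 8)) ^ 2 * (L ^ 2 * (lam + k) / 64)) =
      (1 + k / lam) / (1 - k / lam) / ((1 + k / lam * c) / (1 - k / lam * c)) := by
    rw [div_pow, hsin2, husq]
    field_simp
    ring
  simp only [Real.artanhLog, Function.comp_apply]
  rw [show (1 / k) * (Real.log ((1 + k / lam) / (1 - k / lam)) / 2 -
      Real.log ((1 + k / lam * c) / (1 - k / lam * c)) / 2) =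
      (1 / (2 * k)) * (Real.log ((1 + k / lam) / (1 - k / lam)) -
      Real.log ((1 + k / lam * c) / (1 - k / lam * c))) from by ring]
  rw [← Real.log_div hP.ne' hQ.ne', key]
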